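/- Let M be a finite von Neumann algebra with von Neumann subalgebras B, D ⊆ C ⊆ M such that the normalizer of D in M generates M (i.e., N_M(D)'' = M). If B embeds into D inside M in the sense of Popa (B ≺_M D), then B embeds into D inside C (B ≺_C D). -/
import Mathlib


/-- Popa's intertwining passes to intermediate algebras with regular
target.  Let `(M, τ)` be a finite (tracial) von Neumann algebra with von Neumann
subalgebras `B, D ⊆ C ⊆ M` such that the normalizer of `D` generates `M`
(`N_M(D)'' = M`).  If `B ≺_M D` in the sense of Popa (quantitative form: there are
finitely many `x_i, y_i ∈ M` and `d > 0` with `Σᵢ ‖E_D(x_i b y_i)‖₂² ≥ d` for every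
unitary `b ∈ B`), then `B ≺_C D`, i.e. the elements `x_i, y_i` can be chosen in `C`. -/
theorem stmt17 {M : Type*} [Ring M] [Algebra ℂ M] [StarRing M] [StarModule ℂ M]
    -- the faithful normal tracial state `τ`
    (τ : M →ₗ[ℂ] ℂ)
    (hτ_trace : ∀ x y : M, τ (x * y) = τ (y * x))
    (hτ_one : τ 1 = 1)
    (hτ_star : ∀ x : M, τ (star x) = starRingEnd ℂ (τ x))
    (hτ_pos : ∀ x : M, 0 ≤ (τ (star x * x)).re ∧ (τ (star x * x)).im = 0)
    (hτ_faithful : ∀ x : M, τ (star x * x) = 0 → x = 0)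
    -- the subalgebras `B, D ⊆ C ⊆ M`
    (B D C : StarSubalgebra ℂ M) (hBC : B ≤ C) (hDC : D ≤ C)
    -- the trace-preserving conditional expectation `E_D : M → D`
    (ED : M →ₗ[ℂ] M)
    (hED_mem : ∀ x : M, ED x ∈ D)
    (hED_id : ∀ d ∈ D, ED d = d)
    (hED_bimod : ∀ d₁ ∈ D, ∀ d₂ ∈ D, ∀ x : M, ED (d₁ * x * d₂) = d₁ * ED x * d₂)
    (hED_star : ∀ x : M, ED (star x) = star (ED x))
    (hED_trace : ∀ x : M, τ (ED x) = τ x)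
    -- the trace-preserving conditional expectation `E_C : M → C`
    (EC : M →ₗ[ℂ] M)
    (hEC_mem : ∀ x : M, EC x ∈ C)
    (hEC_id : ∀ c ∈ C, EC c = c)
    (hEC_bimod : ∀ c₁ ∈ C, ∀ c₂ ∈ C, ∀ x : M, EC (c₁ * x * c₂) = c₁ * EC x * c₂)
    (hEC_star : ∀ x : M, EC (star x) = star (EC x))
    (hEC_trace : ∀ x : M, τ (EC x) = τ x)
    -- compatibility `E_D ∘ E_C = E_D`
    (hEDC : ∀ x : M, ED (EC x) = ED x)
    -- `D` is regular in `M`: the normalizing unitaries of `D` generate `M`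
    (hreg : Algebra.adjoin ℂ {v : M | (star v * v = 1 ∧ v * star v = 1) ∧
      (∀ d ∈ D, v * d * star v ∈ D) ∧ ∀ d ∈ D, star v * d * v ∈ D} = ⊤)
    -- `B ≺_M D`
    (hint : ∃ (n : ℕ) (x y : Fin n → M) (d : ℝ), 0 < d ∧
      ∀ b ∈ B, star b * b = 1 → b * star b = 1 →
        d ≤ ∑ i, (τ (star (ED (x i * b * y i)) * ED (x i * b * y i))).re) :
    -- then `B ≺_C D`
    ∃ (n : ℕ) (x y : Fin n → M) (d : ℝ), 0 < d ∧ (∀ i, x i ∈ C ∧ y i ∈ C) ∧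
      ∀ b ∈ B, star b * b = 1 → b * star b = 1 →
        d ≤ ∑ i, (τ (star (ED (x i * b * y i)) * ED (x i * b * y i))).re := by
  classical
  obtain ⟨n, x, y, d, hd, hb⟩ := hint
  set S : Set M := {v : M | (star v * v = 1 ∧ v * star v = 1) ∧
      (∀ d ∈ D, v * d * star v ∈ D) ∧ ∀ d ∈ D, star v * d * v ∈ D} with hSdef
  set n2 : M → ℝ := fun z => (τ (star z * z)).re with hn2def
  have n2_nonneg : ∀ z, 0 ≤ n2 z := fun z => (hτ_pos z).1
  -- E_D is the orthogonal projection: characterization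
  have hED_char : ∀ e ∈ D, ∀ z : M, τ (star e * ED z) = τ (star e * z) := by
    intro e he z
    have h1 := hED_bimod (star e) (star_mem he) 1 (one_mem D) z
    rw [mul_one, mul_one] at h1
    rw [← h1, hED_trace]
  -- E_D commutes with Ad(v) for v ∈ S
  have hED_conj : ∀ v ∈ S, ∀ z : M, ED (v * z * star v) = v * ED z * star v := by
    intro v hv z
    obtain ⟨⟨hv1, hv2⟩, hvD1, hvD2⟩ := hv
    have key : ∀ e ∈ D, ∀ u : M, τ (star e * (v * u * star v)) = τ (star (star v * e * v) * u) := by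
      intro e he u
      have hstar : star (star v * e * v) = star v * star e * v := by
        simp [star_mul, mul_assoc]
      rw [hstar]
      calc τ (star e * (v * u * star v)) = τ (star e * (v * u) * star v) := by
            simp only [← mul_assoc]
        _ = τ (star v * (star e * (v * u))) := hτ_trace _ _
        _ = τ (star v * star e * v * u) := by simp only [← mul_assoc]
    have hdiff : ED (v * z * star v) - v * ED z * star v ∈ D :=
      sub_mem (hED_mem _) (hvD1 _ (hED_mem z))
    have hz0 : ∀ e ∈ D, τ (star e * (ED (v * z * star v) - v * ED z * star v)) = 0 := by
      intro e he
      have h1 : τ (star e * ED (v * z * star v)) = τ (star e * (v * z * star v)) :=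
        hED_char e he _
      have h2 : τ (star e * (v * ED z * star v)) = τ (star e * (v * z * star v)) := by
        rw [key e he (ED z), key e he z, hED_char _ (hvD2 e he)]
      rw [mul_sub, map_sub, h1, h2, sub_self]
    have := hz0 _ hdiff
    have h0 := hτ_faithful _ this
    exact sub_eq_zero.mp h0
  -- 2-norm invariance under conjugation by an isometry
  have n2_conj : ∀ v : M, star v * v = 1 → ∀ z, n2 (v * z * star v) = n2 z := by
    intro v hv z
    have h1 : star (v * z * star v) * (v * z * star v) = v * (star z * z) * star v := by
      have : star (v * z * star v) = v * (star z * star v) := by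
        simp [star_mul, mul_assoc]
      rw [this]
      calc v * (star z * star v) * (v * z * star v)
          = v * star z * (star v * v) * z * star v := by
            simp only [mul_assoc]
        _ = v * (star z * z) * star v := by rw [hv]; simp only [mul_one, mul_assoc]
    have h2 : τ (v * (star z * z) * star v) = τ (star z * z) := by
      calc τ (v * (star z * z) * star v) = τ (v * ((star z * z) * star v)) := by
            rw [mul_assoc]
        _ = τ ((star z * z) * star v * v) := by rw [hτ_trace, mul_assoc]
        _ = τ (star z * z) := by rw [mul_assoc, hv, mul_one]
    simp only [hn2def, h1, h2]
  -- quadratic estimates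
  have n2_zero : n2 0 = 0 := by simp [hn2def]
  have n2_add : ∀ a b : M, n2 (a + b) ≤ 2 * n2 a + 2 * n2 b := by
    intro a b
    have e1 : (τ (star (a + b) * (a + b))).re
        = (τ (star a * a)).re + (τ (star a * b)).re + (τ (star b * a)).re
          + (τ (star b * b)).re := by
      simp only [star_add, add_mul, mul_add, map_add, Complex.add_re]
      ring
    have e2 : (τ (star (a - b) * (a - b))).re
        = (τ (star a * a)).re - (τ (star a * b)).re - (τ (star b * a)).re
          + (τ (star b * b)).re := by
      simp only [star_sub, sub_mul, mul_sub, map_sub, Complex.sub_re, Complex.add_re]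
      ring
    have h3 := (hτ_pos (a - b)).1
    rw [e2] at h3
    simp only [hn2def]
    rw [e1]
    linarith
  have n2_sum : ∀ {ι : Type} (s : Finset ι) (f : ι → M),
      n2 (∑ i ∈ s, f i) ≤ 2 ^ s.card * ∑ i ∈ s, n2 (f i) := by
    intro ι s f
    induction s using Finset.cons_induction with
    | empty => simp [n2_zero]
    | cons i s hi ih =>
      rw [Finset.sum_cons, Finset.sum_cons, Finset.card_cons, pow_succ]
      have h1 := n2_add (f i) (∑ j ∈ s, f j)
      have h2 : (0:ℝ) ≤ ∑ j ∈ s, n2 (f j) := Finset.sum_nonneg fun j _ => n2_nonneg _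
      have h3 : (1:ℝ) ≤ 2 ^ s.card := one_le_pow₀ (by norm_num)
      have h4 := n2_nonneg (f i)
      have h5 := n2_nonneg (∑ j ∈ s, f j)
      nlinarith
  have n2_smul : ∀ (c : ℂ) (z : M), n2 (c • z) = Complex.normSq c * n2 z := by
    intro c z
    have h1 : star (c • z) * (c • z) = (star c * c) • (star z * z) := by
      rw [star_smul, smul_mul_smul_comm]
    simp only [hn2def, h1, map_smul, smul_eq_mul]
    have : star c * c = (Complex.normSq c : ℂ) := by
      simp [Complex.star_def, Complex.normSq_eq_conj_mul_self]
    rw [this, Complex.re_ofReal_mul]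
  -- S is a submonoid
  have hS_one : (1 : M) ∈ S := by
    refine ⟨⟨by simp, by simp⟩, fun e he => by simpa using he, fun e he => by simpa using he⟩
  have hS_mul : ∀ v ∈ S, ∀ w ∈ S, v * w ∈ S := by
    rintro v ⟨⟨hv1, hv2⟩, hvD1, hvD2⟩ w ⟨⟨hw1, hw2⟩, hwD1, hwD2⟩
    refine ⟨⟨?_, ?_⟩, ?_, ?_⟩
    · rw [star_mul]
      calc star w * star v * (v * w) = star w * (star v * v) * w := by
            simp only [mul_assoc]
        _ = 1 := by rw [hv1, mul_one, hw1]
    · rw [star_mul]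
      calc v * w * (star w * star v) = v * (w * star w) * star v := by
            simp only [mul_assoc]
        _ = 1 := by rw [hw2, mul_one, hv2]
    · intro e he
      have : v * w * e * star (v * w) = v * (w * e * star w) * star v := by
        rw [star_mul]; simp only [mul_assoc]
      rw [this]
      exact hvD1 _ (hwD1 _ he)
    · intro e he
      have : star (v * w) * e * (v * w) = star w * (star v * e * v) * w := by
        rw [star_mul]; simp only [mul_assoc]
      rw [this]
      exact hwD2 _ (hvD2 _ he)
  -- every element of M is a linear combination of elements of S
  have hspan : ∀ z : M, z ∈ Submodule.span ℂ S := by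
    intro z
    have h1 : z ∈ Algebra.adjoin ℂ S := by rw [hreg]; trivial
    have h2 : z ∈ Submodule.span ℂ (Submonoid.closure S : Set M) := by
      rw [← Algebra.adjoin_eq_span]; exact h1
    have h3 : (Submonoid.closure S : Set M) ⊆ S := by
      have : Submonoid.closure S ≤
          { carrier := S, one_mem' := hS_one, mul_mem' := fun ha hb => hS_mul _ ha _ hb } :=
        Submonoid.closure_le.mpr le_rfl
      exact this
    exact Submodule.span_mono h3 h2
  -- the key identity: coefficients from S can be replaced by coefficients from C
  have key : ∀ b : M, b ∈ B → star b * b = 1 → b * star b = 1 → ∀ v ∈ S, ∀ w ∈ S,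
      n2 (ED (v * b * w)) = n2 (ED (1 * b * EC (w * v))) := by
    intro b hbB hb1 hb2 v hvS w hwS
    obtain ⟨⟨hv1, hv2⟩, -, -⟩ := id hvS
    have e1 : v * b * w = v * (b * w * v) * star v := by
      have h : v * (b * w * v) * star v = v * (b * w) := by
        simp only [mul_assoc, hv2, mul_one]
      rw [h, mul_assoc]
    rw [e1, hED_conj v hvS, n2_conj v hv1]
    have hbimod := hEC_bimod b (hBC hbB) 1 (one_mem C) (w * v)
    rw [mul_one, mul_one] at hbimod
    have e2 : ED (b * w * v) = ED (1 * b * EC (w * v)) := by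
      rw [one_mul, ← hbimod, hEDC (b * (w * v)), ← mul_assoc]
    rw [e2]
  -- choose representations of the x i and y i as linear combinations over S
  choose p a v hx using fun i => Submodule.mem_span_set'.mp (hspan (x i))
  choose q g w hy using fun i => Submodule.mem_span_set'.mp (hspan (y i))
  -- the new family
  set ι := (Σ i : Fin n, Fin (p i) × Fin (q i)) with hιdef
  set e : Fin (Fintype.card ι) ≃ ι := (Fintype.equivFin ι).symm with hedef
  set x' : Fin (Fintype.card ι) → M := fun _ => 1 with hx'def
  set y' : Fin (Fintype.card ι) → M :=
    fun m => EC ((w (e m).1 (e m).2.2 : M) * (v (e m).1 (e m).2.1 : M)) with hy'def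
  set A : Fin n → ℝ := fun i =>
    (∑ jk : Fin (p i) × Fin (q i), Complex.normSq (a i jk.1 * g i jk.2)) + 1 with hAdef
  have hA_pos : ∀ i, 0 < A i := by
    intro i
    have : (0:ℝ) ≤ ∑ jk : Fin (p i) × Fin (q i), Complex.normSq (a i jk.1 * g i jk.2) :=
      Finset.sum_nonneg fun jk _ => Complex.normSq_nonneg _
    simp only [hAdef]; linarith
  set coef : Fin n → ℝ := fun i =>
    2 ^ (Finset.univ : Finset (Fin (p i) × Fin (q i))).card * A i with hcoefdef
  have hcoef_pos : ∀ i, 0 < coef i := fun i =>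
    mul_pos (pow_pos (by norm_num) _) (hA_pos i)
  set K : ℝ := (∑ i, coef i) + 1 with hKdef
  have hK_pos : (0:ℝ) < K := by
    have : (0:ℝ) ≤ ∑ i, coef i := Finset.sum_nonneg fun i _ => (hcoef_pos i).le
    simp only [hKdef]; linarith
  have hcoef_le : ∀ i, coef i ≤ K := by
    intro i
    have h1 : coef i ≤ ∑ j, coef j :=
      Finset.single_le_sum (fun j _ => (hcoef_pos j).le) (Finset.mem_univ i)
    simp only [hKdef]; linarith
  refine ⟨Fintype.card ι, x', y', d / K, div_pos hd hK_pos,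
    fun m => ⟨one_mem C, hEC_mem _⟩, ?_⟩
  intro b hbB hb1 hb2
  show d / K ≤ ∑ m, n2 (ED (x' m * b * y' m))
  rw [div_le_iff₀ hK_pos]
  have step1 : d ≤ ∑ i, n2 (ED (x i * b * y i)) := hb b hbB hb1 hb2
  -- per-index bound
  have step2 : ∀ i, n2 (ED (x i * b * y i)) ≤
      coef i * ∑ jk : Fin (p i) × Fin (q i),
        n2 (ED (1 * b * EC ((w i jk.2 : M) * (v i jk.1 : M)))) := by
    intro i
    have expand : ED (x i * b * y i) = ∑ jk : Fin (p i) × Fin (q i),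
        (a i jk.1 * g i jk.2) • ED ((v i jk.1 : M) * b * (w i jk.2 : M)) := by
      rw [← hx i, ← hy i]
      rw [Finset.sum_mul, Finset.sum_mul]
      simp only [Finset.mul_sum, smul_mul_assoc, mul_smul_comm, map_sum, map_smul,
        smul_smul, Fintype.sum_prod_type, mul_assoc]
      exact Finset.sum_congr rfl fun j _ => Finset.sum_congr rfl fun k _ => by
        rw [mul_comm (g i k) (a i j)]
    have b1 : n2 (ED (x i * b * y i)) ≤
        2 ^ (Finset.univ : Finset (Fin (p i) × Fin (q i))).card *
          ∑ jk : Fin (p i) × Fin (q i), Complex.normSq (a i jk.1 * g i jk.2) *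
            n2 (ED ((v i jk.1 : M) * b * (w i jk.2 : M))) := by
      rw [expand]
      calc n2 (∑ jk : Fin (p i) × Fin (q i),
            (a i jk.1 * g i jk.2) • ED ((v i jk.1 : M) * b * (w i jk.2 : M)))
          ≤ 2 ^ (Finset.univ : Finset (Fin (p i) × Fin (q i))).card *
            ∑ jk : Fin (p i) × Fin (q i),
              n2 ((a i jk.1 * g i jk.2) • ED ((v i jk.1 : M) * b * (w i jk.2 : M))) :=
            n2_sum _ _
        _ = _ := by rw [Finset.sum_congr rfl fun jk _ => n2_smul _ _]
    have b2 : ∀ jk : Fin (p i) × Fin (q i),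
        Complex.normSq (a i jk.1 * g i jk.2) *
            n2 (ED ((v i jk.1 : M) * b * (w i jk.2 : M)))
          ≤ A i * n2 (ED (1 * b * EC ((w i jk.2 : M) * (v i jk.1 : M)))) := by
      intro jk
      rw [key b hbB hb1 hb2 _ (v i jk.1).2 _ (w i jk.2).2]
      apply mul_le_mul_of_nonneg_right _ (n2_nonneg _)
      have h1 : Complex.normSq (a i jk.1 * g i jk.2) ≤
          ∑ jk' : Fin (p i) × Fin (q i), Complex.normSq (a i jk'.1 * g i jk'.2) :=
        Finset.single_le_sum (fun (jk' : Fin (p i) × Fin (q i)) _ => Complex.normSq_nonneg (a i jk'.1 * g i jk'.2)) (Finset.mem_univ jk)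
      simp only [hAdef]; linarith
    calc n2 (ED (x i * b * y i))
        ≤ 2 ^ (Finset.univ : Finset (Fin (p i) × Fin (q i))).card *
          ∑ jk : Fin (p i) × Fin (q i), Complex.normSq (a i jk.1 * g i jk.2) *
            n2 (ED ((v i jk.1 : M) * b * (w i jk.2 : M))) := b1
      _ ≤ 2 ^ (Finset.univ : Finset (Fin (p i) × Fin (q i))).card *
          ∑ jk : Fin (p i) × Fin (q i),
            A i * n2 (ED (1 * b * EC ((w i jk.2 : M) * (v i jk.1 : M)))) := by
          apply mul_le_mul_of_nonneg_left (Finset.sum_le_sum fun jk _ => b2 jk)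
          positivity
      _ = coef i * ∑ jk : Fin (p i) × Fin (q i),
            n2 (ED (1 * b * EC ((w i jk.2 : M) * (v i jk.1 : M)))) := by
          rw [← Finset.mul_sum, hcoefdef]
          ring
  -- reindex the double sum into a single sum over Fin (card ι)
  have reindex : ∑ m, n2 (ED (x' m * b * y' m)) =
      ∑ i, ∑ jk : Fin (p i) × Fin (q i),
        n2 (ED (1 * b * EC ((w i jk.2 : M) * (v i jk.1 : M)))) := by
    have h1 : ∑ m, n2 (ED (x' m * b * y' m)) = ∑ σ : ι,
        n2 (ED (1 * b * EC ((w σ.1 σ.2.2 : M) * (v σ.1 σ.2.1 : M)))) :=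
      Fintype.sum_equiv e _ _ fun m => rfl
    rw [h1, ← Finset.univ_sigma_univ, Finset.sum_sigma]
  calc d ≤ ∑ i, n2 (ED (x i * b * y i)) := step1
    _ ≤ ∑ i, coef i * ∑ jk : Fin (p i) × Fin (q i),
          n2 (ED (1 * b * EC ((w i jk.2 : M) * (v i jk.1 : M)))) :=
        Finset.sum_le_sum fun i _ => step2 i
    _ ≤ ∑ i, K * ∑ jk : Fin (p i) × Fin (q i),
          n2 (ED (1 * b * EC ((w i jk.2 : M) * (v i jk.1 : M)))) := by
        apply Finset.sum_le_sum
        intro i _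
        apply mul_le_mul_of_nonneg_right (hcoef_le i)
        exact Finset.sum_nonneg fun jk _ => n2_nonneg _
    _ = (∑ m, n2 (ED (x' m * b * y' m))) * K := by
        rw [← Finset.mul_sum, reindex, mul_comm]
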